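/- In a convex geometry, if P is a piece of an element x (a maximal closed set not containing x), then P ∪ {x} is closed. -/

import Mathlib

open Set

variable {X Y Z : Type*}

/-- A choice function: `f A ⊆ A` for all `A`. -/
def IsChoice (f : Set X → Set X) : Prop := ∀ A, f A ⊆ A

/-- A Plott function: choice function satisfying path independence. -/
def IsPlott (f : Set X → Set X) : Prop :=
  IsChoice f ∧ ∀ A B : Set X, f (A ∪ B) = f (f A ∪ B)

/-- Closure in a family of sets: intersection of all members containing `A`. -/
def closureOf (𝓕 : Set (Set X)) (A : Set X) : Set X := ⋂₀ {F | F ∈ 𝓕 ∧ A ⊆ F}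

/-- Extreme points of `A` with respect to the closure system `𝓕`. -/
def extPts (𝓕 : Set (Set X)) (A : Set X) : Set X :=
  {a ∈ A | a ∉ closureOf 𝓕 (A \ {a})}

/-- Convex geometry: contains `univ`, closed under intersection, MKM property. -/
def IsConvexGeometry (𝓕 : Set (Set X)) : Prop :=
  Set.univ ∈ 𝓕 ∧ (∀ F ∈ 𝓕, ∀ G ∈ 𝓕, F ∩ G ∈ 𝓕) ∧
    ∀ A : Set X, closureOf 𝓕 A = closureOf 𝓕 (extPts 𝓕 A)

/-- `P` is a piece of `x`: a closed set not containing `x` such that every closed set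
strictly containing `P` contains `x`. -/
def IsPiece (𝓕 : Set (Set X)) (P : Set X) (x : X) : Prop :=
  P ∈ 𝓕 ∧ x ∉ P ∧ ∀ Q ∈ 𝓕, P ⊂ Q → x ∈ Q

lemma aux_sInter_mem {X : Type*} (𝓕 : Set (Set X)) (huniv : Set.univ ∈ 𝓕)
    (hinter : ∀ F ∈ 𝓕, ∀ G ∈ 𝓕, F ∩ G ∈ 𝓕)
    (S : Set (Set X)) (hS : S.Finite) (hsub : S ⊆ 𝓕) : ⋂₀ S ∈ 𝓕 := by
  refine Set.Finite.induction_on (motive := fun s _ => s ⊆ 𝓕 → ⋂₀ s ∈ 𝓕) S hS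
    (fun _ => by simpa using huniv) ?_ hsub
  intro a s _ _ ih hsub'
  rw [Set.sInter_insert]
  exact hinter _ (hsub' (Set.mem_insert _ _)) _
    (ih fun t ht => hsub' (Set.mem_insert_of_mem _ ht))

lemma aux_subset_closure {X : Type*} (𝓕 : Set (Set X)) (A : Set X) :
    A ⊆ closureOf 𝓕 A := fun a ha F hF => hF.2 ha

lemma aux_closure_mono {X : Type*} (𝓕 : Set (Set X)) {A B : Set X} (h : A ⊆ B) :
    closureOf 𝓕 A ⊆ closureOf 𝓕 B := by
  intro a ha F hF
  exact ha F ⟨hF.1, h.trans hF.2⟩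

lemma aux_closure_subset {X : Type*} (𝓕 : Set (Set X)) {A F : Set X} (hF : F ∈ 𝓕)
    (h : A ⊆ F) : closureOf 𝓕 A ⊆ F := fun a ha => ha F ⟨hF, h⟩

lemma aux_closure_mem {X : Type*} [Fintype X] (𝓕 : Set (Set X))
    (h𝓕 : IsConvexGeometry 𝓕) (A : Set X) : closureOf 𝓕 A ∈ 𝓕 :=
  aux_sInter_mem 𝓕 h𝓕.1 h𝓕.2.1 _ (Set.toFinite _) (fun F hF => hF.1)

/-- if `P` is a piece of `x` then `P ∪ {x}` is closed. -/
theorem piece_union_closed {X : Type*} [Fintype X]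
    (𝓕 : Set (Set X)) (h𝓕 : IsConvexGeometry 𝓕)
    (P : Set X) (x : X) (hP : IsPiece 𝓕 P x) :
    P ∪ {x} ∈ 𝓕 := by
  obtain ⟨hPmem, hxP, hpiece⟩ := hP
  set C := closureOf 𝓕 (P ∪ {x}) with hCdef
  have hCmem : C ∈ 𝓕 := aux_closure_mem 𝓕 h𝓕 _
  have hsub : P ∪ {x} ⊆ C := aux_subset_closure 𝓕 _
  have hxC : x ∈ C := hsub (Or.inr rfl)
  have hCsub : C ⊆ P ∪ {x} := by
    by_contra hcon
    obtain ⟨y, hyC, hyP⟩ := not_subset.mp hcon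
    have hyP' : y ∉ P := fun h => hyP (Or.inl h)
    have hyx : y ≠ x := fun h => hyP (Or.inr h)
    -- closureOf (P ∪ {y}) = C
    have hQmem : closureOf 𝓕 (P ∪ {y}) ∈ 𝓕 := aux_closure_mem 𝓕 h𝓕 _
    have hPQ : P ⊂ closureOf 𝓕 (P ∪ {y}) := by
      refine ⟨(Set.subset_union_left).trans (aux_subset_closure 𝓕 _), fun h => ?_⟩
      exact hyP' (h (aux_subset_closure 𝓕 _ (Or.inr rfl)))
    have hxQ : x ∈ closureOf 𝓕 (P ∪ {y}) := hpiece _ hQmem hPQ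
    have hQeq : closureOf 𝓕 (P ∪ {y}) = C := by
      apply Set.Subset.antisymm
      · exact aux_closure_subset 𝓕 hCmem (union_subset
          ((Set.subset_union_left).trans hsub) (by simpa using hyC))
      · exact aux_closure_subset 𝓕 hQmem (union_subset
          ((Set.subset_union_left).trans (aux_subset_closure 𝓕 _))
          (by simpa using hxQ))
    -- every extreme point of C lies in P
    have hext : extPts 𝓕 C ⊆ P := by
      rintro z ⟨hzC, hz⟩
      by_contra hzP
      rcases eq_or_ne z x with rfl | hzx
      · -- C \ {z} ⊇ P ∪ {y}, whose closure is C ∋ z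
        apply hz
        have : P ∪ {y} ⊆ C \ {z} := by
          rintro w (hw | hw)
          · exact ⟨hsub (Or.inl hw), fun h => hxP (h ▸ hw)⟩
          · rcases hw with rfl
            exact ⟨hyC, hyx⟩
        exact (hQeq ▸ aux_closure_mono 𝓕 this) (hQeq.symm ▸ hzC)
      · apply hz
        have : P ∪ {x} ⊆ C \ {z} := by
          rintro w (hw | hw)
          · exact ⟨hsub (Or.inl hw), fun h => hzP (h ▸ hw)⟩
          · rcases hw with rfl
            exact ⟨hxC, fun h => hzx h.symm⟩
        exact aux_closure_mono 𝓕 this hzC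
    -- MKM: C = closureOf (extPts C) ⊆ closureOf P ⊆ P
    have hCP : C ⊆ P := by
      have h1 : closureOf 𝓕 C ⊆ P := by
        rw [h𝓕.2.2 C]
        exact aux_closure_subset 𝓕 hPmem hext
      exact (aux_subset_closure 𝓕 C).trans h1
    exact hxP (hCP hxC)
  exact (Set.Subset.antisymm hCsub hsub) ▸ hCmem
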